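/- For every finite set S of points in the Euclidean plane ℝ² and every x ∈ S, there exists a subset J ⊆ S \ {x} with |J| ≤ 6 such that for every z ∈ S \ {x} there is some y ∈ J with ‖z − y‖ ≤ ‖z − x‖ (that is, at most six points of S suffice to guard x from every other point of S). -/

import Mathlib

open Finset

noncomputable def toC (v : EuclideanSpace ℝ (Fin 2)) : ℂ := ⟨v 0, v 1⟩

noncomputable def sec (v : EuclideanSpace ℝ (Fin 2)) : ℤ :=
  ⌈(Complex.arg (toC v) + Real.pi) * 3 / Real.pi⌉

lemma abs_toC (v : EuclideanSpace ℝ (Fin 2)) : ‖toC v‖ = ‖v‖ := by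
  rw [Complex.norm_def, Complex.normSq_mk, EuclideanSpace.norm_eq]
  congr 1
  simp [toC, Fin.sum_univ_two]
  ring

lemma toC_ne_zero {v : EuclideanSpace ℝ (Fin 2)} (hv : v ≠ 0) : toC v ≠ 0 := by
  intro h
  have : ‖toC v‖ = 0 := by simp [h]
  rw [abs_toC] at this
  exact hv (norm_eq_zero.mp this)

lemma sec_mem (v : EuclideanSpace ℝ (Fin 2)) : sec v ∈ Finset.Icc (1:ℤ) 6 := by
  have hpi : (0:ℝ) < Real.pi := Real.pi_pos
  have h1 : -Real.pi < Complex.arg (toC v) := Complex.neg_pi_lt_arg _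
  have h2 : Complex.arg (toC v) ≤ Real.pi := Complex.arg_le_pi _
  rw [Finset.mem_Icc]
  constructor
  · have : (0:ℝ) < (Complex.arg (toC v) + Real.pi) * 3 / Real.pi := by
      apply div_pos _ hpi
      nlinarith
    exact Int.ceil_pos.mpr this
  · apply Int.ceil_le.mpr
    rw [div_le_iff₀ hpi]
    push_cast
    nlinarith

lemma arg_close {v w : EuclideanSpace ℝ (Fin 2)} (h : sec v = sec w) :
    |Complex.arg (toC v) - Complex.arg (toC w)| < Real.pi / 3 := by
  have hpi : (0:ℝ) < Real.pi := Real.pi_pos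
  set a := Complex.arg (toC v)
  set b := Complex.arg (toC w)
  set t1 := (a + Real.pi) * 3 / Real.pi with ht1
  set t2 := (b + Real.pi) * 3 / Real.pi with ht2
  have h1 : t1 ≤ (⌈t1⌉ : ℝ) := Int.le_ceil _
  have h2 : ((⌈t1⌉ : ℝ)) < t1 + 1 := Int.ceil_lt_add_one _
  have h3 : t2 ≤ (⌈t2⌉ : ℝ) := Int.le_ceil _
  have h4 : ((⌈t2⌉ : ℝ)) < t2 + 1 := Int.ceil_lt_add_one _
  have hc : ⌈t1⌉ = ⌈t2⌉ := h
  rw [hc] at h1 h2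
  have ht : |t1 - t2| < 1 := by
    rw [abs_lt]; constructor <;> nlinarith
  have key : t1 - t2 = (a - b) * 3 / Real.pi := by
    rw [ht1, ht2]; ring
  rw [key] at ht
  rw [abs_lt] at ht ⊢
  obtain ⟨hl, hr⟩ := ht
  rw [div_lt_iff₀ hpi] at hr
  rw [lt_div_iff₀ hpi] at hl
  constructor <;> nlinarith

lemma inner_eq (v w : EuclideanSpace ℝ (Fin 2)) :
    (inner ℝ w v : ℝ) = w 0 * v 0 + w 1 * v 1 := by
  simp [PiLp.inner_apply, Fin.sum_univ_two]
  ring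

lemma coord_eq {v : EuclideanSpace ℝ (Fin 2)} (hv : v ≠ 0) :
    v 0 = ‖v‖ * Real.cos (Complex.arg (toC v)) ∧
    v 1 = ‖v‖ * Real.sin (Complex.arg (toC v)) := by
  have hne : toC v ≠ 0 := toC_ne_zero hv
  have hn : ‖v‖ ≠ 0 := by simpa using hv
  have hc := Complex.cos_arg hne
  have hs := Complex.sin_arg (toC v)
  rw [abs_toC] at hc hs
  have hre : (toC v).re = v 0 := rfl
  have him : (toC v).im = v 1 := rfl
  rw [hre] at hc
  rw [him] at hs
  constructor
  · field_simp at hc; linarith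
  · field_simp at hs; linarith

lemma key_lemma {x y z : EuclideanSpace ℝ (Fin 2)} (hy : y ≠ x) (hz : z ≠ x)
    (hsec : sec (y - x) = sec (z - x)) (hle : ‖y - x‖ ≤ ‖z - x‖) :
    ‖z - y‖ ≤ ‖z - x‖ := by
  set v := y - x with hv
  set w := z - x with hw
  have hvne : v ≠ 0 := sub_ne_zero.mpr hy
  have hwne : w ≠ 0 := sub_ne_zero.mpr hz
  set a := Complex.arg (toC v)
  set b := Complex.arg (toC w)
  obtain ⟨hv0, hv1⟩ := coord_eq hvne
  obtain ⟨hw0, hw1⟩ := coord_eq hwne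
  have hang : |a - b| < Real.pi / 3 := arg_close hsec
  have hcos : Real.cos (a - b) ≥ 1/2 := by
    have h1 : Real.cos (Real.pi/3) ≤ Real.cos |a - b| := by
      apply Real.cos_le_cos_of_nonneg_of_le_pi (abs_nonneg _)
      · linarith [Real.pi_pos]
      · exact le_of_lt hang
    rw [Real.cos_pi_div_three] at h1
    rw [Real.cos_abs] at h1
    linarith
  have hinner : (inner ℝ w v : ℝ) = ‖w‖ * ‖v‖ * Real.cos (b - a) := by
    rw [inner_eq, hv0, hv1, hw0, hw1, Real.cos_sub]; ring
  have hcos' : Real.cos (b - a) ≥ 1/2 := by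
    rw [← neg_sub a b, Real.cos_neg]
    exact hcos
  have hvnn : (0:ℝ) ≤ ‖v‖ := norm_nonneg _
  have hwnn : (0:ℝ) ≤ ‖w‖ := norm_nonneg _
  have hib : (inner ℝ w v : ℝ) ≥ ‖v‖^2 / 2 := by
    rw [hinner]
    have h1 : (0:ℝ) ≤ ‖w‖ * ‖v‖ * (Real.cos (b - a) - 1/2) :=
      mul_nonneg (mul_nonneg hwnn hvnn) (by linarith)
    have h2 : (0:ℝ) ≤ ‖v‖ * (‖w‖ - ‖v‖) := mul_nonneg hvnn (by linarith)
    nlinarith [h1, h2]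
  have hsq : ‖w - v‖^2 ≤ ‖w‖^2 := by
    have := @norm_sub_sq_real (EuclideanSpace ℝ (Fin 2)) _ _ w v
    nlinarith
  have hzy : z - y = w - v := by rw [hv, hw]; abel
  rw [hzy]
  nlinarith [norm_nonneg (w - v)]

/-- **Six guards suffice in the Euclidean plane.**
For every finite set `S` of points in `ℝ²` and every `x ∈ S`, there is a subset
`J ⊆ S \ {x}` with `|J| ≤ 6` such that every `z ∈ S \ {x}` satisfies
`‖z − y‖ ≤ ‖z − x‖` for some `y ∈ J`. -/
theorem stmt_11
    (S : Finset (EuclideanSpace ℝ (Fin 2)))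
    (x : EuclideanSpace ℝ (Fin 2)) (hx : x ∈ S) :
    ∃ J : Finset (EuclideanSpace ℝ (Fin 2)),
      J ⊆ S ∧ x ∉ J ∧ J.card ≤ 6 ∧
      ∀ z ∈ S, z ≠ x → ∃ y ∈ J, ‖z - y‖ ≤ ‖z - x‖ := by
  classical
  set T : ℤ → Finset (EuclideanSpace ℝ (Fin 2)) :=
    fun i => (S.erase x).filter (fun z => sec (z - x) = i) with hT
  have hsel : ∀ i : ℤ, ∃ Ji : Finset (EuclideanSpace ℝ (Fin 2)),
      Ji ⊆ T i ∧ Ji.card ≤ 1 ∧ ∀ z ∈ T i, ∃ y ∈ Ji, ‖y - x‖ ≤ ‖z - x‖ := by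
    intro i
    by_cases h : (T i).Nonempty
    · obtain ⟨m, hm, hmin⟩ := Finset.exists_min_image (T i) (fun z => ‖z - x‖) h
      exact ⟨{m}, Finset.singleton_subset_iff.mpr hm, by simp,
        fun z hz => ⟨m, Finset.mem_singleton_self m, hmin z hz⟩⟩
    · refine ⟨∅, Finset.empty_subset _, by simp, fun z hz => absurd ⟨z, hz⟩ h⟩
  choose Ji hsub hcard hmin using hsel
  refine ⟨(Finset.Icc (1:ℤ) 6).biUnion Ji, ?_, ?_, ?_, ?_⟩
  · intro y hy
    obtain ⟨i, _, hyi⟩ := Finset.mem_biUnion.mp hy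
    exact Finset.mem_of_mem_erase (Finset.mem_of_mem_filter y (hsub i hyi))
  · intro hxJ
    obtain ⟨i, _, hyi⟩ := Finset.mem_biUnion.mp hxJ
    exact Finset.notMem_erase x S (Finset.mem_of_mem_filter x (hsub i hyi))
  · calc ((Finset.Icc (1:ℤ) 6).biUnion Ji).card
        ≤ ∑ i ∈ Finset.Icc (1:ℤ) 6, (Ji i).card := Finset.card_biUnion_le
      _ ≤ ∑ i ∈ Finset.Icc (1:ℤ) 6, 1 := Finset.sum_le_sum (fun i _ => hcard i)
      _ = 6 := by simp [Int.card_Icc]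
  · intro z hz hzx
    set i := sec (z - x) with hi
    have hzT : z ∈ T i := by
      rw [hT]
      exact Finset.mem_filter.mpr ⟨Finset.mem_erase.mpr ⟨hzx, hz⟩, rfl⟩
    obtain ⟨y, hyJ, hyle⟩ := hmin i z hzT
    have hyT : y ∈ T i := hsub i hyJ
    have hysec : sec (y - x) = i := (Finset.mem_filter.mp hyT).2
    have hyx : y ≠ x := (Finset.mem_erase.mp (Finset.mem_of_mem_filter y hyT)).1
    refine ⟨y, Finset.mem_biUnion.mpr ⟨i, ?_, hyJ⟩, ?_⟩
    · rw [hi]; exact sec_mem _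
    · exact key_lemma hyx hzx (hysec.trans hi) hyle
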